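/- Fix H ∈ ℂ^{B×U}, Y_D ∈ ℂ^{B×D}, and γ ≥ 0. If the Hermitian matrix HᴴH − γ·I_U is positive semidefinite (equivalently, the smallest eigenvalue λ_min of HᴴH satisfies λ_min ≥ γ), then the function S_D ↦ ‖Y_D − H·S_D‖_F² − γ‖S_D‖_F² is convex on ℂ^{U×D} viewed as a real vector space. (Second half of Lemma 1: the relaxed JED objective is convex in S_D for fixed H when λ_min(HᴴH) ≥ γ.) -/

import Mathlib

noncomputable section

open Matrix
open scoped ComplexOrder

/-- Squared Frobenius norm of a complex matrix: `‖A‖_F² = ∑ᵢⱼ |Aᵢⱼ|²`. -/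
def frobSq {m n : Type*} [Fintype m] [Fintype n] (A : Matrix m n ℂ) : ℝ :=
  ∑ i, ∑ j, ‖A i j‖ ^ 2

lemma entry_id (a : ℝ) (p q : ℂ) :
    a * ‖p‖ ^ 2 + (1 - a) * ‖q‖ ^ 2
      - ‖(a : ℂ) * p + ((1 - a : ℝ) : ℂ) * q‖ ^ 2
    = a * (1 - a) * ‖p - q‖ ^ 2 := by
  simp only [Complex.sq_norm, Complex.normSq_apply, Complex.add_re, Complex.add_im,
    Complex.mul_re, Complex.mul_im, Complex.ofReal_re, Complex.ofReal_im,
    Complex.sub_re, Complex.sub_im]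
  ring

lemma frobSq_combo {m n : Type*} [Fintype m] [Fintype n] (a : ℝ)
    (P Q : Matrix m n ℂ) :
    frobSq (a • P + (1 - a) • Q)
      = a * frobSq P + (1 - a) * frobSq Q - a * (1 - a) * frobSq (P - Q) := by
  unfold frobSq
  rw [Finset.mul_sum, Finset.mul_sum, Finset.mul_sum, ← Finset.sum_add_distrib,
    ← Finset.sum_sub_distrib]
  refine Finset.sum_congr rfl fun i _ => ?_
  rw [Finset.mul_sum, Finset.mul_sum, Finset.mul_sum, ← Finset.sum_add_distrib,
    ← Finset.sum_sub_distrib]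
  refine Finset.sum_congr rfl fun j _ => ?_
  have := entry_id a (P i j) (Q i j)
  simp only [Matrix.add_apply, Matrix.smul_apply, Complex.real_smul, Matrix.sub_apply] at *
  linarith

lemma key_psd (B U D : ℕ) (H : Matrix (Fin B) (Fin U) ℂ) (γ : ℝ)
    (hpsd : (Hᴴ * H - (γ : ℂ) • (1 : Matrix (Fin U) (Fin U) ℂ)).PosSemidef)
    (W : Matrix (Fin U) (Fin D) ℂ) :
    γ * frobSq W ≤ frobSq (H * W) := by
  unfold frobSq
  rw [Finset.sum_comm (f := fun i j => ‖W i j‖ ^ 2),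
    Finset.sum_comm (f := fun i j => ‖(H * W) i j‖ ^ 2), Finset.mul_sum]
  refine Finset.sum_le_sum fun j _ => ?_
  set v : Fin U → ℂ := fun i => W i j with hv
  have h0 := hpsd.dotProduct_mulVec_nonneg v
  have hre : 0 ≤ (star v ⬝ᵥ (Hᴴ * H - (γ : ℂ) • 1) *ᵥ v).re := by
    rw [Complex.le_def] at h0
    simpa using h0.1
  have e1 : star v ⬝ᵥ (Hᴴ * H) *ᵥ v = star (H *ᵥ v) ⬝ᵥ (H *ᵥ v) := by
    rw [← Matrix.mulVec_mulVec, Matrix.dotProduct_mulVec, ← Matrix.star_mulVec]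
  have e2 : star v ⬝ᵥ ((γ : ℂ) • (1 : Matrix (Fin U) (Fin U) ℂ)) *ᵥ v
      = (γ : ℂ) * (star v ⬝ᵥ v) := by
    rw [Matrix.smul_mulVec, Matrix.one_mulVec, dotProduct_smul,
      smul_eq_mul]
  rw [Matrix.sub_mulVec, dotProduct_sub, e1, e2] at hre
  have hw : ∀ (k : Type) [Fintype k] (w : k → ℂ),
      (star w ⬝ᵥ w).re = ∑ i, ‖w i‖ ^ 2 := by
    intro k _ w
    simp only [dotProduct, Pi.star_apply, RCLike.star_def]
    rw [Complex.re_sum]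
    refine Finset.sum_congr rfl fun i _ => ?_
    rw [Complex.sq_norm]
    simp [Complex.normSq_apply, Complex.mul_re]
  rw [Complex.sub_re, Complex.mul_re, Complex.ofReal_re, Complex.ofReal_im,
    hw _ (H *ᵥ v), hw _ v] at hre
  have him : (star v ⬝ᵥ v).im = 0 := by
    simp [dotProduct, Complex.im_sum, Complex.mul_im, mul_comm]
  rw [him] at hre
  have hHW : ∀ k, (H * W) k j = (H *ᵥ v) k := fun k => rfl
  simp only [hHW]
  have hWv : ∀ i, W i j = v i := fun i => rfl
  simp only [hWv]
  linarith

/-- Second half of Lemma 1: for fixed `H` and `Y_D`, if `HᴴH − γ·I_U` is positive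
semidefinite (i.e. `λ_min(HᴴH) ≥ γ`), then the relaxed JED objective
`S_D ↦ ‖Y_D − H·S_D‖_F² − γ‖S_D‖_F²` is convex on `ℂ^{U×D}` viewed as a real
vector space. -/
theorem relaxed_jed_convex_in_SD (B U D : ℕ)
    (H : Matrix (Fin B) (Fin U) ℂ) (Y_D : Matrix (Fin B) (Fin D) ℂ)
    (γ : ℝ) (hγ : 0 ≤ γ)
    (hpsd : (Hᴴ * H - (γ : ℂ) • (1 : Matrix (Fin U) (Fin U) ℂ)).PosSemidef) :
    ConvexOn ℝ Set.univ (fun S_D : Matrix (Fin U) (Fin D) ℂ =>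
      frobSq (Y_D - H * S_D) - γ * frobSq S_D) := by
  refine ⟨convex_univ, fun x _ y _ a b ha hb hab => ?_⟩
  have hb' : b = 1 - a := by linarith
  subst hb'
  simp only [smul_eq_mul]
  have h1 : Y_D - H * (a • x + (1 - a) • y)
      = a • (Y_D - H * x) + (1 - a) • (Y_D - H * y) := by
    rw [Matrix.mul_add, Matrix.mul_smul, Matrix.mul_smul, smul_sub, smul_sub]
    ext i j
    simp only [Matrix.sub_apply, Matrix.add_apply, Matrix.smul_apply,
      Complex.real_smul, Complex.ofReal_sub, Complex.ofReal_one]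
    ring
  rw [h1, frobSq_combo, frobSq_combo]
  have h2 : (Y_D - H * x) - (Y_D - H * y) = H * (y - x) := by
    rw [Matrix.mul_sub]; abel
  rw [h2]
  have h4 : frobSq (x - y) = frobSq (y - x) := by
    unfold frobSq
    refine Finset.sum_congr rfl fun i _ => Finset.sum_congr rfl fun j _ => ?_
    rw [show (x - y) i j = -((y - x) i j) by simp [Matrix.sub_apply], norm_neg]
  rw [h4]
  have h3 := key_psd B U D H γ hpsd (y - x)
  have hab' : 0 ≤ a * (1 - a) := mul_nonneg ha hb
  nlinarith [h3, hab']
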